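/- Let z : ℝ³ → ℝ³ be continuously differentiable near a point x with div z(x) = 0, and let ℓ : ℝ³ → ℝ be twice continuously differentiable near x. Then −(∇ℓ(x) × z(x)) · (curl z)(x) = −div(z × (∇ℓ × z))(x) + (1/2) Δℓ(x) |z(x)|² + (1/2) div(∇ℓ |z|²)(x) − Hess ℓ(x)(z(x), z(x)), where z × (∇ℓ × z) denotes the vector field x ↦ z(x) × (∇ℓ(x) × z(x)) and ∇ℓ|z|² the vector field x ↦ |z(x)|² ∇ℓ(x). -/

import Mathlib

noncomputable section

/-- Euclidean dot product on `ℝ³`. -/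
def dot3 (a b : Fin 3 → ℝ) : ℝ := ∑ i, a i * b i

/-- Cross product on `ℝ³`. -/
def cross3 (a b : Fin 3 → ℝ) : Fin 3 → ℝ :=
  ![a 1 * b 2 - a 2 * b 1, a 2 * b 0 - a 0 * b 2, a 0 * b 1 - a 1 * b 0]

/-- Partial derivative in the `i`-th coordinate of a scalar function on `ℝ³`. -/
def pd (i : Fin 3) (f : (Fin 3 → ℝ) → ℝ) (x : Fin 3 → ℝ) : ℝ :=
  fderiv ℝ f x (Pi.single i 1)

/-- Gradient of a scalar function on `ℝ³`. -/
def grad3 (f : (Fin 3 → ℝ) → ℝ) (x : Fin 3 → ℝ) : Fin 3 → ℝ := fun i => pd i f x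

/-- Divergence of a vector field on `ℝ³`. -/
def div3 (F : (Fin 3 → ℝ) → Fin 3 → ℝ) (x : Fin 3 → ℝ) : ℝ :=
  ∑ i, pd i (fun y => F y i) x

/-- Curl of a vector field on `ℝ³`. -/
def curl3 (F : (Fin 3 → ℝ) → Fin 3 → ℝ) (x : Fin 3 → ℝ) : Fin 3 → ℝ :=
  ![pd 1 (fun y => F y 2) x - pd 2 (fun y => F y 1) x,
    pd 2 (fun y => F y 0) x - pd 0 (fun y => F y 2) x,
    pd 0 (fun y => F y 1) x - pd 1 (fun y => F y 0) x]

/-- Hessian bilinear form of a scalar function on `ℝ³`. -/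
def hess3 (f : (Fin 3 → ℝ) → ℝ) (x : Fin 3 → ℝ) (a b : Fin 3 → ℝ) : ℝ :=
  ∑ i, ∑ j, pd i (pd j f) x * a i * b j

/-- Laplacian of a scalar function on `ℝ³`. -/
def lap3 (f : (Fin 3 → ℝ) → ℝ) (x : Fin 3 → ℝ) : ℝ :=
  ∑ i, pd i (pd i f) x

/-- Directional derivative `(b·∇)F` of a vector field on `ℝ³`. -/
def dirD (b : Fin 3 → ℝ) (F : (Fin 3 → ℝ) → Fin 3 → ℝ) (x : Fin 3 → ℝ) : Fin 3 → ℝ :=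
  fun k => ∑ i, b i * pd i (fun y => F y k) x

lemma pd_mul' {f g : (Fin 3 → ℝ) → ℝ} {x : Fin 3 → ℝ} {i : Fin 3}
    (hf : DifferentiableAt ℝ f x) (hg : DifferentiableAt ℝ g x) :
    pd i (fun y => f y * g y) x = pd i f x * g x + f x * pd i g x := by
  unfold pd; rw [fderiv_fun_mul hf hg]; simp; ring

lemma pd_add' {f g : (Fin 3 → ℝ) → ℝ} {x : Fin 3 → ℝ} {i : Fin 3}
    (hf : DifferentiableAt ℝ f x) (hg : DifferentiableAt ℝ g x) :
    pd i (fun y => f y + g y) x = pd i f x + pd i g x := by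
  unfold pd; rw [fderiv_fun_add hf hg]; simp

lemma pd_sub' {f g : (Fin 3 → ℝ) → ℝ} {x : Fin 3 → ℝ} {i : Fin 3}
    (hf : DifferentiableAt ℝ f x) (hg : DifferentiableAt ℝ g x) :
    pd i (fun y => f y - g y) x = pd i f x - pd i g x := by
  unfold pd; rw [fderiv_fun_sub hf hg]; simp

/-- For a divergence-free `C¹` field `z` and a `C²` function `ℓ`:
`−(∇ℓ × z) · curl z = −div(z × (∇ℓ × z)) + (1/2) Δℓ |z|² + (1/2) div(∇ℓ|z|²) − Hess ℓ(z,z)`. -/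
theorem neg_gradCross_dot_curl
    (z : (Fin 3 → ℝ) → Fin 3 → ℝ) (ℓ : (Fin 3 → ℝ) → ℝ) (x : Fin 3 → ℝ)
    (hz : ContDiffAt ℝ 1 z x) (hdiv : div3 z x = 0) (hℓ : ContDiffAt ℝ 2 ℓ x) :
    -(dot3 (cross3 (grad3 ℓ x) (z x)) (curl3 z x))
      = -(div3 (fun x' => cross3 (z x') (cross3 (grad3 ℓ x') (z x'))) x)
        + (1/2 : ℝ) * lap3 ℓ x * dot3 (z x) (z x)
        + (1/2 : ℝ) * div3 (fun x' => dot3 (z x') (z x') • grad3 ℓ x') x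
        - hess3 ℓ x (z x) (z x) := by
  have hzd : DifferentiableAt ℝ z x := hz.differentiableAt one_ne_zero
  have hzi : ∀ j : Fin 3, DifferentiableAt ℝ (fun y => z y j) x :=
    differentiableAt_pi.mp hzd
  have h1 : ContDiffAt ℝ 1 (fderiv ℝ ℓ) x := hℓ.fderiv_right le_rfl
  have hai : ∀ j : Fin 3, DifferentiableAt ℝ (fun y => pd j ℓ y) x := fun j =>
    (h1.differentiableAt one_ne_zero).clm_apply (differentiableAt_const _)
  simp only [div3, dot3, cross3, grad3, curl3, hess3, lap3, Fin.sum_univ_three,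
    Matrix.cons_val_zero, Matrix.cons_val_one, Matrix.head_cons, Matrix.cons_val_two,
    Matrix.tail_cons, Pi.smul_apply, smul_eq_mul]
  simp (disch := fun_prop) only [pd_sub', pd_mul', pd_add']
  have htr : pd 0 (fun y => z y 0) x + pd 1 (fun y => z y 1) x + pd 2 (fun y => z y 2) x = 0 := by
    simpa [div3, Fin.sum_univ_three] using hdiv
  have h22 : pd 2 (fun y => z y 2) x
      = -(pd 0 (fun y => z y 0) x + pd 1 (fun y => z y 1) x) := by linarith
  rw [h22]; ring

end
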